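/- If a pattern P ⊆ ℕ×ℕ has at most n entries in each row, then every matrix S with entries bounded by 1 in modulus and supported on P has Schur multiplier norm at most √n. -/

import Mathlib

set_option synthInstance.maxHeartbeats 1000000
set_option maxHeartbeats 1000000


open scoped ENNReal ComplexOrder

noncomputable def opNorm2 {m : Type*} [Fintype m] [DecidableEq m] (M : Matrix m m ℂ) : ℝ :=
  ‖Matrix.toEuclideanCLM (𝕜 := ℂ) M‖

noncomputable def schurNorm {m : Type*} [Fintype m] [DecidableEq m] (M : Matrix m m ℂ) : ℝ :=
  ⨆ X : {X : Matrix m m ℂ // opNorm2 X ≤ 1}, opNorm2 (M.hadamard X.1)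

noncomputable def schurNormENN (A : ℕ → ℕ → ℂ) : ℝ≥0∞ :=
  ⨆ n : ℕ, ENNReal.ofReal (schurNorm (Matrix.of fun i j : Fin n => A i j))

noncomputable def schurBound (P : Set (ℕ × ℕ)) : ℝ≥0∞ :=
  ⨆ S : {S : ℕ → ℕ → ℂ //
      (∀ i j, ‖S i j‖ ≤ 1) ∧ ∀ i j, (i, j) ∉ P → S i j = 0},
    schurNormENN S.1

noncomputable def matAbs {m : Type*} [Fintype m] [DecidableEq m] (T : Matrix m m ℂ) :
    Matrix m m ℂ :=
  ((Matrix.isHermitian_conjTranspose_mul_self T).eigenvectorUnitary : Matrix m m ℂ) *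
    Matrix.diagonal ((↑) ∘ (√·) ∘ (Matrix.isHermitian_conjTranspose_mul_self T).eigenvalues) *
    (star (Matrix.isHermitian_conjTranspose_mul_self T).eigenvectorUnitary : Matrix m m ℂ)

lemma toEuclideanCLM_apply' {N : ℕ} (A : Matrix (Fin N) (Fin N) ℂ)
    (x : EuclideanSpace ℂ (Fin N)) (i : Fin N) :
    (Matrix.toEuclideanCLM (𝕜 := ℂ) A x) i = ∑ j, A i j * x j := by
  have h2 := congrFun (Matrix.ofLp_toEuclideanCLM (𝕜 := ℂ) A x) i
  simpa [Matrix.mulVec, dotProduct, Matrix.toLin'_apply] using h2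

lemma step_bound {N : ℕ} (M X : Matrix (Fin N) (Fin N) ℂ) (c : ℝ) (hc : 0 ≤ c)
    (hrow : ∀ i, ∑ j, ‖M i j‖ ^ 2 ≤ c ^ 2)
    (u v : EuclideanSpace ℂ (Fin N)) :
    ‖(inner ℂ u (Matrix.toEuclideanCLM (𝕜 := ℂ) (M.hadamard X) v) : ℂ)‖ ≤
      c * ‖Matrix.toEuclideanCLM (𝕜 := ℂ) X‖ * (‖u‖ * ‖v‖) := by
  set w : Fin N → EuclideanSpace ℂ (Fin N) :=
    fun j => (WithLp.equiv 2 _).symm (fun i => (starRingEnd ℂ) (M i j) * u i) with hw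
  set z : Fin N → EuclideanSpace ℂ (Fin N) :=
    fun j => v j • EuclideanSpace.single j (1 : ℂ) with hz
  have expand : (inner ℂ u (Matrix.toEuclideanCLM (𝕜 := ℂ) (M.hadamard X) v) : ℂ) =
      ∑ j, (inner ℂ (w j) (Matrix.toEuclideanCLM (𝕜 := ℂ) X (z j)) : ℂ) := by
    have l1 : (inner ℂ u (Matrix.toEuclideanCLM (𝕜 := ℂ) (M.hadamard X) v) : ℂ) =
        ∑ i, ∑ j, (starRingEnd ℂ) (u i) * ((M i j * X i j) * v j) := by
      rw [PiLp.inner_apply]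
      refine Finset.sum_congr rfl fun i _ => ?_
      rw [RCLike.inner_apply', toEuclideanCLM_apply', Finset.mul_sum]
      refine Finset.sum_congr rfl fun j _ => ?_
      rw [Matrix.hadamard_apply]
    rw [l1, Finset.sum_comm]
    refine Finset.sum_congr rfl fun j _ => ?_
    rw [PiLp.inner_apply]
    refine Finset.sum_congr rfl fun i _ => ?_
    have hXz : (Matrix.toEuclideanCLM (𝕜 := ℂ) X (z j)) i = X i j * v j := by
      rw [hz, map_smul]
      simp only [PiLp.smul_apply, toEuclideanCLM_apply', smul_eq_mul]
      rw [Finset.mul_sum, Finset.sum_eq_single j]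
      · simp [EuclideanSpace.single_apply]; ring
      · intro k _ hk; simp [EuclideanSpace.single_apply, hk]
      · simp
    rw [hXz]
    simp only [RCLike.inner_apply, hw, WithLp.equiv_symm_apply, PiLp.toLp_apply, map_mul,
      RingHomCompTriple.comp_apply, RCLike.star_def, starRingEnd_self_apply,
      RingHom.id_apply]
    ring
  rw [expand]
  calc ‖∑ j, (inner ℂ (w j) (Matrix.toEuclideanCLM (𝕜 := ℂ) X (z j)) : ℂ)‖
      ≤ ∑ j, ‖(inner ℂ (w j) (Matrix.toEuclideanCLM (𝕜 := ℂ) X (z j)) : ℂ)‖ :=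
        norm_sum_le _ _
    _ ≤ ∑ j, ‖Matrix.toEuclideanCLM (𝕜 := ℂ) X‖ * (‖w j‖ * ‖v j‖) := by
        refine Finset.sum_le_sum fun j _ => ?_
        refine le_trans (norm_inner_le_norm _ _) ?_
        have h1 : ‖Matrix.toEuclideanCLM (𝕜 := ℂ) X (z j)‖ ≤
            ‖Matrix.toEuclideanCLM (𝕜 := ℂ) X‖ * ‖v j‖ := by
          refine le_trans ((Matrix.toEuclideanCLM (𝕜 := ℂ) X).le_opNorm _) ?_
          rw [hz]
          simp [norm_smul, EuclideanSpace.norm_single]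
        calc ‖w j‖ * ‖Matrix.toEuclideanCLM (𝕜 := ℂ) X (z j)‖
            ≤ ‖w j‖ * (‖Matrix.toEuclideanCLM (𝕜 := ℂ) X‖ * ‖v j‖) :=
              mul_le_mul_of_nonneg_left h1 (norm_nonneg _)
          _ = ‖Matrix.toEuclideanCLM (𝕜 := ℂ) X‖ * (‖w j‖ * ‖v j‖) := by ring
    _ = ‖Matrix.toEuclideanCLM (𝕜 := ℂ) X‖ * ∑ j, ‖w j‖ * ‖v j‖ := by
        rw [Finset.mul_sum]
    _ ≤ ‖Matrix.toEuclideanCLM (𝕜 := ℂ) X‖ * (c * (‖u‖ * ‖v‖)) := by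
        refine mul_le_mul_of_nonneg_left ?_ (norm_nonneg _)
        have hwsq : ∑ j, ‖w j‖ ^ 2 ≤ c ^ 2 * ‖u‖ ^ 2 := by
          have h1 : ∀ j : Fin N, ‖w j‖ ^ 2 = ∑ i, ‖M i j‖ ^ 2 * ‖u i‖ ^ 2 := by
            intro j
            rw [EuclideanSpace.norm_eq, Real.sq_sqrt (by positivity)]
            refine Finset.sum_congr rfl fun i _ => ?_
            simp [hw, WithLp.equiv_symm_apply, PiLp.toLp_apply, norm_mul, mul_pow]
          simp_rw [h1]
          rw [Finset.sum_comm]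
          have h2 : ∀ i : Fin N, ∑ j, ‖M i j‖ ^ 2 * ‖u i‖ ^ 2 ≤ c ^ 2 * ‖u i‖ ^ 2 := by
            intro i
            rw [← Finset.sum_mul]
            exact mul_le_mul_of_nonneg_right (hrow i) (by positivity)
          refine le_trans (Finset.sum_le_sum fun i _ => h2 i) ?_
          rw [← Finset.mul_sum, EuclideanSpace.norm_eq, Real.sq_sqrt (by positivity)]
        have hvsq : ∑ j, ‖v j‖ ^ 2 = ‖v‖ ^ 2 := by
          rw [EuclideanSpace.norm_eq, Real.sq_sqrt (by positivity)]
        have cs := Finset.sum_mul_sq_le_sq_mul_sq Finset.univ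
          (fun j => ‖w j‖) (fun j => ‖v j‖)
        have hnn : (0:ℝ) ≤ ∑ j, ‖w j‖ * ‖v j‖ := by positivity
        have hb : (0:ℝ) ≤ c * (‖u‖ * ‖v‖) := by positivity
        have hsq : (∑ j, ‖w j‖ * ‖v j‖) ^ 2 ≤ (c * (‖u‖ * ‖v‖)) ^ 2 := by
          calc (∑ j, ‖w j‖ * ‖v j‖) ^ 2 ≤ (∑ j, ‖w j‖ ^ 2) * ∑ j, ‖v j‖ ^ 2 := cs
            _ ≤ (c ^ 2 * ‖u‖ ^ 2) * ‖v‖ ^ 2 := by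
                rw [hvsq]
                exact mul_le_mul_of_nonneg_right hwsq (by positivity)
            _ = (c * (‖u‖ * ‖v‖)) ^ 2 := by ring
        exact (pow_le_pow_iff_left₀ hnn hb two_ne_zero).mp hsq
    _ = c * ‖Matrix.toEuclideanCLM (𝕜 := ℂ) X‖ * (‖u‖ * ‖v‖) := by ring

open Finset in
lemma key_bound {N : ℕ} (M X : Matrix (Fin N) (Fin N) ℂ) (c : ℝ) (hc : 0 ≤ c)
    (hrow : ∀ i, ∑ j, ‖M i j‖ ^ 2 ≤ c ^ 2) :
    opNorm2 (M.hadamard X) ≤ c * opNorm2 X := by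
  have main : ∀ v : EuclideanSpace ℂ (Fin N),
      ‖Matrix.toEuclideanCLM (𝕜 := ℂ) (M.hadamard X) v‖ ≤
        c * ‖Matrix.toEuclideanCLM (𝕜 := ℂ) X‖ * ‖v‖ := by
    intro v
    set Tv := Matrix.toEuclideanCLM (𝕜 := ℂ) (M.hadamard X) v with hTv
    have h := step_bound M X c hc hrow Tv v
    have hself : ‖(inner ℂ Tv Tv : ℂ)‖ = ‖Tv‖ ^ 2 := by
      rw [inner_self_eq_norm_sq_to_K]
      simp [norm_pow]
    rw [hself] at h
    rcases eq_or_lt_of_le (norm_nonneg Tv) with h0 | h0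
    · rw [← h0]
      exact mul_nonneg (mul_nonneg hc (norm_nonneg _)) (norm_nonneg _)
    · have h2 : ‖Tv‖ * ‖Tv‖ ≤ (c * ‖Matrix.toEuclideanCLM (𝕜 := ℂ) X‖ * ‖v‖) * ‖Tv‖ := by
        nlinarith
      have := le_of_mul_le_mul_right h2 h0
      linarith
  have : ‖Matrix.toEuclideanCLM (𝕜 := ℂ) (M.hadamard X)‖ ≤
      c * ‖Matrix.toEuclideanCLM (𝕜 := ℂ) X‖ :=
    (Matrix.toEuclideanCLM (𝕜 := ℂ) (M.hadamard X)).opNorm_le_bound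
      (mul_nonneg hc (norm_nonneg _)) main
  simpa [opNorm2] using this

theorem stmt_0 (P : Set (ℕ × ℕ)) (n : ℕ)
    (hP : ∀ i, {j | (i, j) ∈ P}.encard ≤ n)
    (S : ℕ → ℕ → ℂ)
    (hbd : ∀ i j, ‖S i j‖ ≤ 1)
    (hsupp : ∀ i j, (i, j) ∉ P → S i j = 0) :
    schurNormENN S ≤ ENNReal.ofReal (Real.sqrt n) := by
  refine iSup_le fun N => ENNReal.ofReal_le_ofReal ?_
  set M : Matrix (Fin N) (Fin N) ℂ := Matrix.of fun i j : Fin N => S i j with hM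
  have hrow : ∀ i : Fin N, ∑ j, ‖M i j‖ ^ 2 ≤ (Real.sqrt n) ^ 2 := by
    intro i
    rw [Real.sq_sqrt (Nat.cast_nonneg n)]
    classical
    set F : Finset (Fin N) := Finset.univ.filter (fun j => S i j ≠ 0) with hF
    have hcard : (F.card : ℕ∞) ≤ (n : ℕ∞) := by
      have hinj := Fin.val_injective (n := N)
      have h1 : ((F.image Fin.val : Finset ℕ) : Set ℕ) ⊆ {j | ((i : ℕ), j) ∈ P} := by
        intro j hj
        simp only [Finset.coe_image, Set.mem_image, Finset.mem_coe, hF,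
          Finset.mem_filter] at hj
        obtain ⟨j', ⟨_, hj'⟩, rfl⟩ := hj
        by_contra hmem
        exact hj' (hsupp _ _ hmem)
      calc (F.card : ℕ∞) = ((F.image Fin.val).card : ℕ∞) := by
            rw [Finset.card_image_of_injective _ hinj]
        _ = ((F.image Fin.val : Finset ℕ) : Set ℕ).encard := by
            rw [Set.encard_coe_eq_coe_finsetCard]
        _ ≤ {j | ((i : ℕ), j) ∈ P}.encard := Set.encard_mono h1
        _ ≤ n := hP i
    have hcard' : F.card ≤ n := by exact_mod_cast hcard
    calc ∑ j, ‖M i j‖ ^ 2 ≤ ∑ j : Fin N, (if S (i:ℕ) (j:ℕ) ≠ 0 then (1:ℝ) else 0) := by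
          refine Finset.sum_le_sum fun j _ => ?_
          by_cases h : S (i:ℕ) (j:ℕ) = 0
          · simp [hM, h]
          · simp only [h, if_true, ne_eq, not_false_iff]
            have : ‖S (i : ℕ) (j : ℕ)‖ ≤ 1 := by
              exact hbd i j
            calc ‖M i j‖ ^ 2 = ‖S (i:ℕ) (j:ℕ)‖ ^ 2 := by rw [hM]; rfl
              _ ≤ 1 := by nlinarith [norm_nonneg (S (i:ℕ) (j:ℕ))]
      _ = F.card := by
          rw [hF, Finset.sum_boole]
      _ ≤ n := by exact_mod_cast hcard'
  refine Real.iSup_le (fun X => ?_) (Real.sqrt_nonneg n)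
  calc opNorm2 (M.hadamard X.1) ≤ Real.sqrt n * opNorm2 X.1 :=
        key_bound M X.1 _ (Real.sqrt_nonneg n) hrow
    _ ≤ Real.sqrt n * 1 := mul_le_mul_of_nonneg_left X.2 (Real.sqrt_nonneg n)
    _ = Real.sqrt n := mul_one _
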